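/- Let 𝒜 be a complex Banach algebra and a, b, c, d ∈ 𝒜 satisfy acd = dbd and bdb = bac. If 1 − ac has a generalized n-strongly Drazin inverse, then 1 − bd has a generalized n-strongly Drazin inverse. -/

import Mathlib

def Quasinilpotent {R : Type*} [Ring R] (q : R) : Prop :=
  ∀ x : R, q * x = x * q → IsUnit (1 + q * x)

def InDoubleCommutant {R : Type*} [Ring R] (x a : R) : Prop :=
  ∀ y : R, y * a = a * y → x * y = y * x

def HasGnsDrazin {R : Type*} [Ring R] (n : ℕ) (a : R) : Prop :=
  ∃ x : R, x * a * x = x ∧ InDoubleCommutant x a ∧ Quasinilpotent (a ^ n - a * x)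

open Filter Topology

set_option linter.unusedSectionVars false
set_option maxHeartbeats 1600000

section RingHelpers
variable {R : Type*} [Ring R]

lemma phi_mul {a b c d z z' : R}
    (h1 : a*c*d = d*b*d) (hz' : (d*b)*z' = z'*(d*b)) :
    (b*z*d)*(b*z'*d) = b*(z*z'*(a*c))*d := by
  have e1 : (b*z*d)*(b*z'*d) = (b*z)*(((d*b)*z')*d) := by noncomm_ring
  rw [e1, hz']
  have e2 : (b*z)*((z'*(d*b))*d) = (b*z)*(z'*(d*b*d)) := by noncomm_ring
  rw [e2, ← h1]
  noncomm_ring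

lemma mul_beta {a b c d z : R} (h1 : a*c*d = d*b*d) :
    (1 + b*z*d)*(1 - b*d) = 1 + b*(z*(1 - a*c) - 1)*d := by
  have e1 : (1 + b*z*d)*(1-b*d) = 1 + b*z*d - b*d - (b*z)*(d*b*d) := by noncomm_ring
  rw [e1, ← h1]
  noncomm_ring

lemma beta_mul {a b c d z : R} (h2 : b*d*b = b*a*c) :
    (1 - b*d)*(1 + b*z*d) = 1 + b*((1 - a*c)*z - 1)*d := by
  have e1 : (1-b*d)*(1+b*z*d) = 1 + b*z*d - b*d - (b*d*b)*(z*d) := by noncomm_ring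
  rw [e1, h2]
  noncomm_ring

end RingHelpers

section Analysis
variable {A : Type*} [NormedRing A] [NormedAlgebra ℂ A] [CompleteSpace A]

lemma mem_le_sr {lam : ℂ} {u : A} (h : lam ∈ spectrum ℂ u) :
    (‖lam‖₊ : ENNReal) ≤ spectralRadius ℂ u :=
  le_iSup₂ (f := fun k (_ : k ∈ spectrum ℂ u) => (‖k‖₊ : ENNReal)) lam h

lemma sr_zero_of_subset {u : A} (h : spectrum ℂ u ⊆ {0}) : spectralRadius ℂ u = 0 := by
  refine le_antisymm (iSup₂_le fun k hk => ?_) zero_le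
  have : k = 0 := h hk
  simp [this]

lemma rz_pow_ev (p : A) (hp : spectralRadius ℂ p = 0) (δ : NNReal) (hδ : 0 < δ) :
    ∀ᶠ j : ℕ in atTop, (‖p ^ j‖₊ : ENNReal) < (δ : ENNReal) ^ (j : ℕ) := by
  have gelp := spectrum.pow_nnnorm_pow_one_div_tendsto_nhds_spectralRadius p
  rw [hp] at gelp
  have h1 : ∀ᶠ j : ℕ in atTop, (‖p ^ j‖₊ : ENNReal) ^ (1 / (j : ℝ)) < (δ : ENNReal) := by
    refine gelp.eventually_lt_const ?_
    exact_mod_cast hδ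
  filter_upwards [h1, eventually_ge_atTop 1] with j hj hj1
  have hjr : (0:ℝ) < (j:ℝ) := by exact_mod_cast hj1
  have h2 := ENNReal.rpow_lt_rpow hj hjr (z := (j : ℝ))
  have e1 : ((‖p ^ j‖₊ : ENNReal) ^ (1/(j:ℝ))) ^ (j:ℝ) = (‖p ^ j‖₊ : ENNReal) := by
    rw [← ENNReal.rpow_mul, one_div, inv_mul_cancel₀ (ne_of_gt hjr), ENNReal.rpow_one]
  have e2 : ((δ:ENNReal)) ^ (j:ℝ) = (δ:ENNReal)^(j:ℕ) := ENNReal.rpow_natCast _ j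
  rw [e1, e2] at h2
  exact h2

lemma rz_tendsto_pow_zero (p : A) (hp : spectralRadius ℂ p = 0) :
    Tendsto (fun N : ℕ => p^N) atTop (𝓝 0) := by
  have hev := rz_pow_ev p hp 2⁻¹ (by norm_num)
  have hev' : ∀ᶠ N : ℕ in atTop, ‖p ^ N‖ ≤ (2⁻¹ : ℝ)^N := by
    filter_upwards [hev] with N hN
    have h3 : (‖p ^ N‖₊ : ENNReal) < (((2⁻¹ : NNReal)^N : NNReal) : ENNReal) := by
      rwa [ENNReal.coe_pow]
    have h4 : ‖p ^ N‖₊ ≤ (2⁻¹ : NNReal)^N := (ENNReal.coe_lt_coe.mp h3).le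
    calc ‖p ^ N‖ = ((‖p ^ N‖₊ : NNReal) : ℝ) := rfl
    _ ≤ (((2⁻¹ : NNReal)^N : NNReal) : ℝ) := by exact_mod_cast h4
    _ = (2⁻¹ : ℝ)^N := by push_cast; ring
  exact squeeze_zero_norm' hev'
    (tendsto_pow_atTop_nhds_zero_of_lt_one (by norm_num) (by norm_num))

/-- Master lemma. -/
lemma ml (u p : A) (hp : spectralRadius ℂ p = 0) (C D : NNReal)
    (h : ∀ k : ℕ, 1 ≤ k → ‖u ^ k‖₊ ≤ C * D ^ k * ‖p ^ (k - 1)‖₊) :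
    spectralRadius ℂ u = 0 := by
  have gel := spectrum.pow_nnnorm_pow_one_div_tendsto_nhds_spectralRadius u
  have gelp := spectrum.pow_nnnorm_pow_one_div_tendsto_nhds_spectralRadius p
  rw [hp] at gelp
  have key : ∀ δ : NNReal, 0 < δ → spectralRadius ℂ u ≤ 2 * D * δ := by
    intro δ hδ
    have hev : ∀ᶠ j : ℕ in atTop, (‖p ^ j‖₊ : ENNReal) < (δ : ENNReal) ^ (j : ℕ) :=
      rz_pow_ev p hp δ hδ
    set c : ENNReal := (C : ENNReal) / (δ : ENNReal) with hc
    have hcfin : c ≠ ⊤ :=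
      (ENNReal.div_lt_top (by simp) (by exact_mod_cast hδ.ne')).ne
    obtain ⟨K2, hK2⟩ : ∃ K2 : ℕ, c ≤ 2 ^ K2 := by
      obtain ⟨K2, hK2⟩ := pow_unbounded_of_one_lt c.toNNReal (one_lt_two (α := NNReal))
      refine ⟨K2, ?_⟩
      rw [← ENNReal.coe_toNNReal hcfin]
      exact_mod_cast hK2.le
    have hbound : ∀ᶠ k : ℕ in atTop,
        (‖u ^ k‖₊ : ENNReal) ^ (1 / (k:ℝ)) ≤ 2 * D * δ := by
      have hev' : ∀ᶠ k : ℕ in atTop, (‖p ^ (k-1)‖₊ : ENNReal) < (δ:ENNReal) ^ (k-1 : ℕ) := by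
        have : Tendsto (fun k : ℕ => k - 1) atTop atTop := tendsto_sub_atTop_nat 1
        exact this.eventually hev
      filter_upwards [hev', eventually_ge_atTop 1, eventually_ge_atTop K2] with k hk hk1 hkK
      have hkr : (0:ℝ) < (k:ℝ) := by exact_mod_cast hk1
      have step1 : (‖u ^ k‖₊ : ENNReal) ≤ c * ((D:ENNReal) * δ) ^ k := by
        calc (‖u ^ k‖₊ : ENNReal) ≤ (C:ENNReal) * (D:ENNReal)^k * (‖p ^ (k-1)‖₊ : ENNReal) := by
              exact_mod_cast h k hk1
        _ ≤ (C:ENNReal) * (D:ENNReal)^k * (δ:ENNReal)^(k-1:ℕ) := by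
              gcongr
        _ = c * ((D:ENNReal) * δ) ^ k := by
              rw [mul_pow, hc]
              have hδ' : (δ:ENNReal) ≠ 0 := by exact_mod_cast hδ.ne'
              have : (δ:ENNReal) ^ (k-1:ℕ) = (δ:ENNReal)^k / (δ:ENNReal) := by
                rw [ENNReal.eq_div_iff hδ' (by simp), ← pow_succ']
                congr 1
                omega
              rw [this, ENNReal.div_eq_inv_mul, ENNReal.div_eq_inv_mul]
              ring
      have step2 : (‖u ^ k‖₊ : ENNReal) ^ (1 / (k:ℝ)) ≤ c ^ (1/(k:ℝ)) * ((D:ENNReal) * δ) := by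
        calc (‖u ^ k‖₊ : ENNReal) ^ (1 / (k:ℝ)) ≤ (c * ((D:ENNReal) * δ) ^ k) ^ (1/(k:ℝ)) := by
              exact ENNReal.rpow_le_rpow step1 (by positivity)
        _ = c ^ (1/(k:ℝ)) * (((D:ENNReal) * δ) ^ k) ^ (1/(k:ℝ)) := by
              rw [ENNReal.mul_rpow_of_nonneg _ _ (by positivity)]
        _ = c ^ (1/(k:ℝ)) * ((D:ENNReal) * δ) := by
              rw [← ENNReal.rpow_natCast ((D:ENNReal) * δ) k, ← ENNReal.rpow_mul,
                mul_one_div, div_self (ne_of_gt hkr), ENNReal.rpow_one]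
      have step3 : c ^ (1/(k:ℝ)) ≤ 2 := by
        have : c ≤ (2:ENNReal) ^ k := hK2.trans (by
          apply pow_le_pow_right₀ (by norm_num) hkK)
        calc c ^ (1/(k:ℝ)) ≤ ((2:ENNReal) ^ k) ^ (1/(k:ℝ)) :=
              ENNReal.rpow_le_rpow this (by positivity)
        _ = 2 := by
              rw [← ENNReal.rpow_natCast 2 k, ← ENNReal.rpow_mul,
                mul_one_div, div_self (ne_of_gt hkr), ENNReal.rpow_one]
      calc (‖u ^ k‖₊ : ENNReal) ^ (1 / (k:ℝ)) ≤ c ^ (1/(k:ℝ)) * ((D:ENNReal) * δ) := step2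
      _ ≤ 2 * ((D:ENNReal) * δ) := by gcongr
      _ = 2 * D * δ := by rw [mul_assoc]
    exact le_of_tendsto gel hbound
  -- conclude
  by_contra hr0
  have hrfin : spectralRadius ℂ u ≠ ⊤ :=
    ne_top_of_le_ne_top
      (ENNReal.mul_ne_top (ENNReal.mul_ne_top (by norm_num) ENNReal.coe_ne_top) ENNReal.one_ne_top)
      (key 1 one_pos)
  have hD : D ≠ 0 := by
    intro hD0
    apply hr0
    have := key 1 one_pos
    simpa [hD0] using this
  set r := spectralRadius ℂ u with hrdef
  have hrpos : 0 < r.toNNReal := by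
    rw [ENNReal.toNNReal_pos_iff]
    exact ⟨pos_iff_ne_zero.mpr hr0, lt_top_iff_ne_top.mpr hrfin⟩
  set δ : NNReal := r.toNNReal / (4 * D) with hδdef
  have hδpos : 0 < δ := by
    apply div_pos hrpos
    positivity
  have hkey := key δ hδpos
  have hNN : (2 * D * δ : NNReal) = r.toNNReal / 2 := by
    rw [hδdef, div_eq_mul_inv, div_eq_mul_inv, mul_inv]
    have h4 : (4:NNReal) = 2 * 2 := by norm_num
    rw [h4, mul_inv]
    calc 2 * D * (r.toNNReal * (2⁻¹ * 2⁻¹ * D⁻¹))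
        = r.toNNReal * 2⁻¹ * (2 * 2⁻¹) * (D * D⁻¹) := by ring
    _ = r.toNNReal * 2⁻¹ := by
        rw [mul_inv_cancel₀ (two_ne_zero' (α := NNReal)), mul_inv_cancel₀ hD, mul_one, mul_one]
  have hkey' : r ≤ ((2 * D * δ : NNReal) : ENNReal) := by push_cast; exact hkey
  have hlt : ((r.toNNReal / 2 : NNReal) : ENNReal) < r := by
    have h5 : (r.toNNReal / 2 : NNReal) < r.toNNReal := NNReal.half_lt_self hrpos.ne'
    calc ((r.toNNReal / 2 : NNReal) : ENNReal) < (r.toNNReal : ENNReal) := by exact_mod_cast h5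
    _ = r := ENNReal.coe_toNNReal hrfin
  rw [hNN] at hkey'
  exact absurd hkey' (not_le.mpr hlt)

lemma rz_mul (p v : A) (hp : spectralRadius ℂ p = 0) (hc : p * v = v * p) :
    spectralRadius ℂ (p * v) = 0 := by
  apply ml (p * v) p hp ‖p‖₊ ‖v‖₊
  intro k hk
  have hcomm : Commute p v := hc
  rw [hcomm.mul_pow]
  have hk' : p ^ k = p ^ (k-1) * p := by
    conv_lhs => rw [show k = (k-1)+1 from by omega]
    rw [pow_succ]
  have hb1 : ‖p ^ k‖₊ ≤ ‖p ^ (k-1)‖₊ * ‖p‖₊ := by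
    rw [hk']
    exact nnnorm_mul_le _ _
  have hb2 : ‖v ^ k‖₊ ≤ ‖v‖₊ ^ k := nnnorm_pow_le' _ (by omega)
  calc ‖p ^ k * v ^ k‖₊ ≤ ‖p ^ k‖₊ * ‖v ^ k‖₊ := nnnorm_mul_le _ _
  _ ≤ (‖p ^ (k-1)‖₊ * ‖p‖₊) * ‖v‖₊ ^ k := mul_le_mul' hb1 hb2
  _ = ‖p‖₊ * ‖v‖₊ ^ k * ‖p ^ (k-1)‖₊ := by ring

lemma rz_isUnit_one_add (u : A) (hu : spectralRadius ℂ u = 0) : IsUnit (1 + u) := by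
  have hmem : (-1 : ℂ) ∉ spectrum ℂ u := by
    intro hmem
    have := mem_le_sr hmem
    rw [hu] at this
    simp at this
  rw [spectrum.notMem_iff] at hmem
  have : algebraMap ℂ A (-1) - u = -(1 + u) := by
    simp [Algebra.algebraMap_eq_smul_one]
    abel
  rw [this] at hmem
  exact (IsUnit.neg_iff _).mp hmem

lemma quasinilpotent_of_rz (q : A) (h : spectralRadius ℂ q = 0) : Quasinilpotent q := by
  intro v hv
  exact rz_isUnit_one_add _ (rz_mul q v h hv)

lemma rz_of_quasinilpotent (q : A) (h : Quasinilpotent q) : spectralRadius ℂ q = 0 := by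
  apply sr_zero_of_subset
  intro lam hlam
  by_contra hne
  have hne' : lam ≠ 0 := hne
  have hcomm : q * (algebraMap ℂ A (-lam⁻¹)) = (algebraMap ℂ A (-lam⁻¹)) * q :=
    (Algebra.commutes (-lam⁻¹) q).symm
  have hunit := h _ hcomm
  rw [spectrum.mem_iff] at hlam
  apply hlam
  have key : algebraMap ℂ A lam - q = lam • (1 + q * algebraMap ℂ A (-lam⁻¹)) := by
    rw [Algebra.algebraMap_eq_smul_one, Algebra.algebraMap_eq_smul_one]
    rw [mul_smul_comm, mul_one, smul_add, smul_smul]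
    rw [mul_neg, mul_inv_cancel₀ hne']
    simp [sub_eq_add_neg]
  rw [key]
  have hsm : (lam • (1 + q * algebraMap ℂ A (-lam⁻¹))) =
      (lam • (1:A)) * (1 + q * algebraMap ℂ A (-lam⁻¹)) := by
    rw [smul_mul_assoc, one_mul]
  rw [hsm]
  apply IsUnit.mul _ hunit
  refine ⟨⟨lam • 1, lam⁻¹ • 1, ?_, ?_⟩, rfl⟩
  · rw [smul_mul_smul_comm, mul_inv_cancel₀ hne', one_mul, one_smul]
  · rw [smul_mul_smul_comm, inv_mul_cancel₀ hne', one_mul, one_smul]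

lemma rz_pow_root (u : A) (n : ℕ) (hn : 1 ≤ n) (h : spectralRadius ℂ (u ^ n) = 0) :
    spectralRadius ℂ u = 0 := by
  apply sr_zero_of_subset
  intro lam hlam
  by_contra hne
  have hne' : lam ≠ 0 := hne
  -- λ^n ∈ spectrum of u^n
  have hpow : lam ^ n ∈ spectrum ℂ (u ^ n) := by
    rw [spectrum.mem_iff]
    intro hunit
    rw [spectrum.mem_iff] at hlam
    apply hlam
    have hx : algebraMap ℂ A (lam ^ n) - u ^ n =
        (∑ i ∈ Finset.range n, (algebraMap ℂ A lam) ^ i * u ^ (n - 1 - i)) *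
          (algebraMap ℂ A lam - u) := by
      rw [map_pow]
      exact (Commute.geom_sum₂_mul (Algebra.commutes lam u) n).symm ▸
        (Commute.geom_sum₂_mul (show Commute (algebraMap ℂ A lam) u from Algebra.commutes lam u) n)
    rw [hx] at hunit
    have hcu : Commute (algebraMap ℂ A lam) u := Algebra.commutes lam u
    have hc1 : Commute (algebraMap ℂ A lam) (algebraMap ℂ A lam - u) :=
      (Commute.refl _).sub_right hcu
    have hc2 : Commute u (algebraMap ℂ A lam - u) :=
      hcu.symm.sub_right (Commute.refl u)
    have hcomm : Commute (∑ i ∈ Finset.range n, (algebraMap ℂ A lam) ^ i * u ^ (n - 1 - i))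
        (algebraMap ℂ A lam - u) :=
      Commute.sum_left _ _ _ (fun i _ => (hc1.pow_left i).mul_left (hc2.pow_left (n - 1 - i)))
    exact (hcomm.isUnit_mul_iff.mp hunit).2
  have := mem_le_sr hpow
  rw [h] at this
  have hz : lam ^ n = 0 := by
    simpa using this
  exact hne' (by simpa [pow_eq_zero_iff (show n ≠ 0 by omega)] using hz)


end Analysis

theorem stmt12 {A : Type*} [NormedRing A] [NormedAlgebra ℂ A] [CompleteSpace A]
    (n : ℕ) (a b c d : A) (h1 : a * c * d = d * b * d) (h2 : b * d * b = b * a * c)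
    (h : HasGnsDrazin n (1 - a * c)) : HasGnsDrazin n (1 - b * d) := by
  obtain ⟨x, hx1, hx2, hx3⟩ := h
  have h1' : a*(c*d) = d*(b*d) := by simpa [mul_assoc] using h1
  have h2' : b*(d*b) = b*(a*c) := by simpa [mul_assoc] using h2
  set al : A := 1 - a*c with hal_def
  set be : A := 1 - b*d with hbe_def
  -- R = d*b commutes with a*c
  have hRP : (d*b)*(a*c) = (a*c)*(d*b) := by
    have e1 : (a*(c*d))*b = (d*(b*d))*b := by rw [h1']
    calc (d*b)*(a*c) = d*(b*(a*c)) := by noncomm_ring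
    _ = d*(b*(d*b)) := by rw [h2']
    _ = (d*(b*d))*b := by noncomm_ring
    _ = (a*(c*d))*b := by rw [← h1']
    _ = (a*c)*(d*b) := by noncomm_ring
  have hRal : (d*b)*al = al*(d*b) := by
    rw [hal_def, mul_sub, sub_mul, mul_one, one_mul, hRP]
  have hxal : x*al = al*x := hx2 al rfl
  have hRx : x*(d*b) = (d*b)*x := hx2 (d*b) hRal
  set e : A := al*x with he_def
  have he : e*e = e := by
    rw [he_def]
    calc (al*x)*(al*x) = al*((x*al)*x) := by noncomm_ring
    _ = al*x := by rw [hx1]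
  have hex : e*x = x := by
    rw [he_def]
    calc (al*x)*x = (x*al)*x := by rw [hxal]
    _ = x := hx1
  have hxe : x*e = x := by
    rw [he_def]
    calc x*(al*x) = (x*al)*x := by noncomm_ring
    _ = x := hx1
  have hale : al*e = e*al := by
    rw [he_def]
    calc al*(al*x) = al*(x*al) := by rw [hxal]
    _ = (al*x)*al := by noncomm_ring
  have hRe : (d*b)*e = e*(d*b) := by
    rw [he_def]
    calc (d*b)*(al*x) = ((d*b)*al)*x := by noncomm_ring
    _ = (al*(d*b))*x := by rw [hRal]
    _ = al*((d*b)*x) := by noncomm_ring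
    _ = al*(x*(d*b)) := by rw [← hRx]
    _ = (al*x)*(d*b) := by noncomm_ring
  set abar : A := al - al*e with habar_def
  have habar_eq : abar = al*(1-e) := by rw [habar_def, mul_sub, mul_one]
  have habar_al : abar*al = al*abar := by
    rw [habar_def]
    calc (al - al*e)*al = al*al - (al*e)*al := by noncomm_ring
    _ = al*al - al*(al*e) := by rw [show (al*e)*al = al*(al*e) by rw [mul_assoc, ← hale]]
    _ = al*(al - al*e) := by noncomm_ring
  have habar_x : abar*x = 0 := by
    rw [habar_def]
    calc (al - al*e)*x = al*x - al*(e*x) := by noncomm_ring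
    _ = 0 := by rw [hex]; noncomm_ring
  have hx_abar : x*abar = 0 := by
    rw [habar_def]
    calc x*(al - al*e) = (x*al) - ((x*al)*e) := by noncomm_ring
    _ = al*x - (al*x)*e := by rw [hxal]
    _ = al*x - al*(x*e) := by noncomm_ring
    _ = 0 := by rw [hxe]; noncomm_ring
  have habar_e : abar*e = 0 := by
    rw [habar_def]
    calc (al - al*e)*e = al*e - al*(e*e) := by noncomm_ring
    _ = 0 := by rw [he]; noncomm_ring
  have he_abar : e*abar = 0 := by
    rw [habar_def]
    calc e*(al - al*e) = e*al - (e*al)*e := by noncomm_ring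
    _ = al*e - (al*e)*e := by rw [hale]
    _ = al*e - al*(e*e) := by noncomm_ring
    _ = 0 := by rw [he]; noncomm_ring
  have habar_R : abar*(d*b) = (d*b)*abar := by
    rw [habar_def]
    calc (al - al*e)*(d*b) = al*(d*b) - al*(e*(d*b)) := by noncomm_ring
    _ = al*(d*b) - al*((d*b)*e) := by rw [hRe]
    _ = al*(d*b) - (al*(d*b))*e := by noncomm_ring
    _ = (d*b)*al - ((d*b)*al)*e := by rw [hRal]
    _ = (d*b)*(al - al*e) := by noncomm_ring
  -- quasinilpotent element
  set ze : A := al^n - e with hze_def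
  have rzze : spectralRadius ℂ ze = 0 := rz_of_quasinilpotent _ hx3
  have hal_pow_e : ∀ k : ℕ, al^k*e = e*al^k := fun k =>
    (show Commute al e from hale).pow_left k
  have habank : ∀ k, 1 ≤ k → abar^k = al^k - al^k*e := by
    intro k hk
    induction k with
    | zero => omega
    | succ m ih =>
      rcases Nat.eq_zero_or_pos m with hm0 | hmpos
      · subst hm0; simpa using habar_def
      · rw [pow_succ, ih hmpos, habar_def]
        calc (al^m - al^m*e)*(al - al*e)
            = al^m*al - al^m*(al*e) - (al^m*e)*al + (al^m*(e*(al*e)))  := by noncomm_ring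
        _ = al^m*al - al^m*(al*e) - (al^m*e)*al + (al^m*((al*e)*e)) := by
              rw [show e*(al*e) = (al*e)*e by rw [← mul_assoc, ← hale]]
        _ = al^m*al - al^m*(al*e) - al^m*(e*al) + (al^m*(al*(e*e))) := by
              rw [mul_assoc al e e]; noncomm_ring
        _ = al^m*al - al^m*(al*e) - al^m*(al*e) + (al^m*(al*e)) := by
              rw [he, ← hale]
        _ = al^(m+1) - al^(m+1)*e := by rw [pow_succ]; noncomm_ring
  -- abar is quasinilpotent (spectral radius zero)
  have rz_abar : spectralRadius ℂ abar = 0 := by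
    rcases Nat.eq_zero_or_pos n with hn0 | hnpos
    · -- n = 0 : ze = 1 - e
      have hze0 : ze = 1 - e := by rw [hze_def, hn0, pow_zero]
      have hcomm : ze*al = al*ze := by
        rw [hze0]
        calc (1-e)*al = al - e*al := by noncomm_ring
        _ = al - al*e := by rw [hale]
        _ = al*(1-e) := by noncomm_ring
      have habz : abar = ze * al := by
        rw [hze0, habar_def]
        calc al - al*e = al - e*al := by rw [hale]
        _ = (1-e)*al := by noncomm_ring
      rw [habz]
      exact rz_mul _ _ rzze hcomm
    · -- n ≥ 1
      have hcomm : ze*(1-e) = (1-e)*ze := by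
        rw [hze_def]
        calc (al^n - e)*(1-e) = al^n - al^n*e - e + e*e := by noncomm_ring
        _ = al^n - e*al^n - e + e*e := by rw [hal_pow_e]
        _ = (1-e)*(al^n - e) := by noncomm_ring
      have hp : spectralRadius ℂ (ze*(1-e)) = 0 := rz_mul _ _ rzze hcomm
      have hzee : ze*(1-e) = al^n - al^n*e := by
        rw [hze_def]
        calc (al^n - e)*(1-e) = al^n - al^n*e - e + e*e := by noncomm_ring
        _ = al^n - al^n*e - e + e := by rw [he]
        _ = al^n - al^n*e := by noncomm_ring
      have : abar^n = ze*(1-e) := by rw [hzee, habank n hnpos]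
      exact rz_pow_root _ n hnpos (by rw [this]; exact hp)
  -- the unit g
  have hU : IsUnit (1 - abar) := by
    have h1 : spectralRadius ℂ (abar * (-1)) = 0 :=
      rz_mul _ _ rz_abar (by noncomm_ring)
    have := rz_isUnit_one_add _ h1
    simpa [sub_eq_add_neg] using this
  obtain ⟨G, hG⟩ := hU
  set g : A := ((G⁻¹ : Aˣ) : A) with hg_def
  have hg1 : g * (1 - abar) = 1 := by rw [← hG, hg_def]; exact Units.inv_mul G
  have hg2 : (1 - abar) * g = 1 := by rw [← hG, hg_def]; exact Units.mul_inv G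
  have comm_g : ∀ t : A, t*abar = abar*t → t*g = g*t := by
    intro t htt
    have hcG : Commute t (G : A) := by
      rw [hG]
      calc t*(1-abar) = t - t*abar := by noncomm_ring
      _ = t - abar*t := by rw [htt]
      _ = (1-abar)*t := by noncomm_ring
    exact hcG.units_inv_right
  have halg : al*g = g*al := comm_g al habar_al.symm
  have hxg : x*g = g*x := comm_g x (by rw [hx_abar, habar_x])
  have heg : e*g = g*e := comm_g e (by rw [he_abar, habar_e])
  have hRg : (d*b)*g = g*(d*b) := comm_g (d*b) habar_R.symm
  have hge : g*e = e := by
    have h' : (1-abar)*e = e := by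
      calc (1-abar)*e = e - abar*e := by noncomm_ring
      _ = e := by rw [habar_e]; noncomm_ring
    calc g*e = g*((1-abar)*e) := by rw [h']
    _ = (g*(1-abar))*e := by noncomm_ring
    _ = e := by rw [hg1]; noncomm_ring
  have hgx : g*x = x := by
    have h' : (1-abar)*x = x := by
      calc (1-abar)*x = x - abar*x := by noncomm_ring
      _ = x := by rw [habar_x]; noncomm_ring
    calc g*x = g*((1-abar)*x) := by rw [h']
    _ = (g*(1-abar))*x := by noncomm_ring
    _ = x := by rw [hg1]; noncomm_ring
  have halg_val : al*g = g - 1 + al*e := by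
    have habarg : abar*g = g - 1 := by
      have h' : g - g*abar = 1 := by
        calc g - g*abar = g*(1-abar) := by noncomm_ring
        _ = 1 := hg1
      have h'' : g*abar = g - 1 := by
        rw [← h']; abel
      rw [comm_g abar rfl, h'']
    calc al*g = (abar + al*e)*g := by rw [habar_def]; noncomm_ring
    _ = abar*g + al*(e*g) := by noncomm_ring
    _ = abar*g + al*(g*e) := by rw [heg]
    _ = g - 1 + al*e := by rw [habarg, hge]
  -- w and y
  set w : A := x - g + e with hw_def
  set y : A := 1 + b*w*d with hy_def
  have hxal' : x*al = al*x := by rw [hxal, he_def]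
  have hwal : al*w = e - g + 1 := by
    rw [hw_def]
    calc al*(x - g + e) = al*x - al*g + al*e := by noncomm_ring
    _ = e - (g - 1 + al*e) + al*e := by rw [halg_val, ← he_def]
    _ = e - g + 1 := by abel
  have hwalc : w*al = al*w := by
    rw [hw_def]
    calc (x-g+e)*al = x*al - g*al + e*al := by noncomm_ring
    _ = al*x - al*g + al*e := by rw [hxal', ← halg, ← hale]
    _ = al*(x-g+e) := by noncomm_ring
  have hwR : (d*b)*w = w*(d*b) := by
    rw [hw_def]
    calc (d*b)*(x - g + e) = (d*b)*x - (d*b)*g + (d*b)*e := by noncomm_ring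
    _ = x*(d*b) - g*(d*b) + e*(d*b) := by rw [← hRx, hRg, hRe]
    _ = (x-g+e)*(d*b) := by noncomm_ring
  have hac : (a*c : A) = 1 - al := by rw [hal_def]; abel
  have hwP : w*(a*c) = x - 1 := by
    calc w*(a*c) = w - w*al := by rw [hac]; noncomm_ring
    _ = w - al*w := by rw [hwalc]
    _ = (x - g + e) - (e - g + 1) := by rw [hwal, hw_def]
    _ = x - 1 := by abel
  have hegx : (e-g)*x = 0 := by
    calc (e-g)*x = e*x - g*x := by noncomm_ring
    _ = 0 := by rw [hex, hgx]; abel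
  have hybe : y*be = 1 + b*(e-g)*d := by
    rw [hy_def, hbe_def, mul_beta h1]
    have hz1 : w*(1-a*c) - 1 = e - g := by
      rw [← hal_def, hwalc, hwal]; abel
    rw [hz1]
  have hbey : be*y = 1 + b*(e-g)*d := by
    rw [hy_def, hbe_def, beta_mul h2]
    have hz1 : (1-a*c)*w - 1 = e - g := by
      rw [← hal_def, hwal]; abel
    rw [hz1]
  have goal1 : y*be*y = y := by
    rw [hybe, hy_def]
    have hkey : (e-g)*w*(a*c) = -(e-g) := by
      calc (e-g)*w*(a*c) = (e-g)*(w*(a*c)) := by noncomm_ring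
      _ = (e-g)*(x-1) := by rw [hwP]
      _ = (e-g)*x - (e-g) := by noncomm_ring
      _ = -(e-g) := by rw [hegx]; abel
    calc (1 + b*(e-g)*d)*(1 + b*w*d)
        = 1 + b*(e-g)*d + b*w*d + (b*(e-g)*d)*(b*w*d) := by noncomm_ring
    _ = 1 + b*(e-g)*d + b*w*d + b*((e-g)*w*(a*c))*d := by rw [phi_mul h1 hwR]
    _ = 1 + b*(e-g)*d + b*w*d + b*(-(e-g))*d := by rw [hkey]
    _ = 1 + b*w*d := by noncomm_ring
  -- powers of be
  set u : ℕ → A := fun k => -(∑ i ∈ Finset.range k, al^i) with hu_def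
  have hgs : ∀ k : ℕ, (∑ i ∈ Finset.range k, al^i)*al
      = al^k - 1 + (∑ i ∈ Finset.range k, al^i) := by
    intro k
    have hh := geom_sum_mul al k
    rw [mul_sub, mul_one] at hh
    rw [← hh]; abel
  have hbepow : ∀ k, be^k = 1 + b*(u k)*d := by
    intro k
    induction k with
    | zero => simp [hu_def]
    | succ m ih =>
      rw [pow_succ, ih, hbe_def, mul_beta h1]
      have hstep : (u m)*(1-a*c) - 1 = u (m+1) := by
        rw [← hal_def, hu_def]
        simp only [neg_mul]
        rw [hgs m, geom_sum_succ']
        abel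
      rw [hstep]
  -- the quasinilpotent q
  set z : A := u n - e + g with hz_def
  set q : A := b*z*d with hq_def
  have hunP : (u n)*(a*c) = al^n - 1 := by
    calc (u n)*(a*c) = (u n) - (u n)*al := by rw [hac]; noncomm_ring
    _ = -(∑ i ∈ Finset.range n, al^i) + (∑ i ∈ Finset.range n, al^i)*al := by
        rw [hu_def]; simp only [neg_mul]; abel
    _ = al^n - 1 := by rw [hgs n]; abel
  have heP : e*(a*c) = e - al*e := by
    calc e*(a*c) = e - e*al := by rw [hac]; noncomm_ring
    _ = e - al*e := by rw [← hale]
  have hgP : g*(a*c) = 1 - al*e := by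
    calc g*(a*c) = g - g*al := by rw [hac]; noncomm_ring
    _ = g - al*g := by rw [halg]
    _ = g - (g - 1 + al*e) := by rw [halg_val]
    _ = 1 - al*e := by abel
  have hzP : z*(a*c) = ze := by
    calc z*(a*c) = (u n)*(a*c) - e*(a*c) + g*(a*c) := by rw [hz_def]; noncomm_ring
    _ = (al^n - 1) - (e - al*e) + (1 - al*e) := by rw [hunP, heP, hgP]
    _ = ze := by rw [hze_def]; abel
  have hRun : (d*b)*(u n) = (u n)*(d*b) := by
    rw [hu_def]
    simp only [mul_neg, neg_mul, Finset.mul_sum, Finset.sum_mul]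
    congr 1
    apply Finset.sum_congr rfl
    intro i _
    exact ((show Commute (d*b) al from hRal).pow_right i).eq
  have hzR : (d*b)*z = z*(d*b) := by
    rw [hz_def]
    calc (d*b)*(u n - e + g) = (d*b)*(u n) - (d*b)*e + (d*b)*g := by noncomm_ring
    _ = (u n)*(d*b) - e*(d*b) + g*(d*b) := by rw [hRun, hRe, hRg]
    _ = (u n - e + g)*(d*b) := by noncomm_ring
  have hcom_al_g : ∀ k : ℕ, al^k*g = g*al^k := fun k =>
    ((show Commute al g from halg).pow_left k).eq
  have hcom_un_e : (u n)*e = e*(u n) := by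
    rw [hu_def]
    simp only [mul_neg, neg_mul, Finset.mul_sum, Finset.sum_mul]
    congr 1
    apply Finset.sum_congr rfl
    intro i _
    exact hal_pow_e i
  have hcom_un_g : (u n)*g = g*(u n) := by
    rw [hu_def]
    simp only [mul_neg, neg_mul, Finset.mul_sum, Finset.sum_mul]
    congr 1
    apply Finset.sum_congr rfl
    intro i _
    exact hcom_al_g i
  have hcom_un_aln : (u n)*al^n = al^n*(u n) := by
    rw [hu_def]
    simp only [mul_neg, neg_mul, Finset.mul_sum, Finset.sum_mul]
    congr 1
    apply Finset.sum_congr rfl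
    intro i _
    exact ((Commute.refl al).pow_pow i n).eq
  have hzze : z*ze = ze*z := by
    rw [hz_def, hze_def]
    calc (u n - e + g)*(al^n - e)
        = (u n)*al^n - (u n)*e - e*al^n + e*e + g*al^n - g*e := by noncomm_ring
    _ = al^n*(u n) - e*(u n) - al^n*e + e*e + al^n*g - e*g := by
        rw [hcom_un_aln, hcom_un_e, hal_pow_e, hcom_al_g, heg]
    _ = (al^n - e)*(u n - e + g) := by noncomm_ring
  have hqpow : ∀ k, q^(k+1) = b*(ze^k*z)*d := by
    intro k
    induction k with
    | zero => rw [pow_one, hq_def, pow_zero, one_mul]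
    | succ m ih =>
      rw [pow_succ, ih, hq_def, phi_mul h1 hzR]
      have hbr : (ze^m*z)*z*(a*c) = ze^(m+1)*z := by
        calc (ze^m*z)*z*(a*c) = ze^m*(z*(z*(a*c))) := by noncomm_ring
        _ = ze^m*(z*ze) := by rw [hzP]
        _ = ze^m*(ze*z) := by rw [hzze]
        _ = ze^(m+1)*z := by rw [pow_succ]; noncomm_ring
      rw [hbr]
  have rzq : spectralRadius ℂ q = 0 := by
    apply ml q ze rzze (‖b‖₊ * ‖z*d‖₊) 1
    intro k hk
    have hk' : q^k = b*(ze^(k-1)*z)*d := by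
      conv_lhs => rw [show k = (k-1)+1 from by omega]
      exact hqpow (k-1)
    rw [hk']
    calc ‖b*(ze^(k-1)*z)*d‖₊ = ‖b*((ze^(k-1))*(z*d))‖₊ := by
          rw [show b*(ze^(k-1)*z)*d = b*((ze^(k-1))*(z*d)) from by noncomm_ring]
    _ ≤ ‖b‖₊ * ‖(ze^(k-1))*(z*d)‖₊ := nnnorm_mul_le _ _
    _ ≤ ‖b‖₊ * (‖ze^(k-1)‖₊ * ‖z*d‖₊) := by gcongr; exact nnnorm_mul_le _ _
    _ = ‖b‖₊ * ‖z*d‖₊ * 1^k * ‖ze^(k-1)‖₊ := by ring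
  have goal3 : Quasinilpotent (be^n - be*y) := by
    have heq : be^n - be*y = q := by
      calc be^n - be*y = (1 + b*(u n)*d) - (1 + b*(e-g)*d) := by rw [hbepow n, hbey]
      _ = b*(u n - e + g)*d := by noncomm_ring
      _ = q := by rw [hq_def, hz_def]
    rw [heq]
    exact quasinilpotent_of_rz q rzq
  -- double commutant
  have goal2 : InDoubleCommutant y be := by
    intro t ht
    have htQ : t*(b*d) = (b*d)*t := by
      have h'' : t - t*(b*d) = t - (b*d)*t := by
        calc t - t*(b*d) = t*(1-b*d) := by noncomm_ring
        _ = t*be := by rw [hbe_def]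
        _ = be*t := ht
        _ = (1-b*d)*t := by rw [hbe_def]
        _ = t - (b*d)*t := by noncomm_ring
      exact sub_right_inj.mp h''
    set s : A := d*(t*b) with hs_def
    have hsP : s*(a*c) = (a*c)*s := by
      rw [hs_def]
      calc (d*(t*b))*(a*c) = d*(t*(b*(a*c))) := by noncomm_ring
      _ = d*(t*(b*(d*b))) := by rw [← h2']
      _ = d*((t*(b*d))*b) := by noncomm_ring
      _ = d*(((b*d)*t)*b) := by rw [htQ]
      _ = (d*(b*d))*(t*b) := by noncomm_ring
      _ = (a*(c*d))*(t*b) := by rw [← h1']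
      _ = (a*c)*(d*(t*b)) := by noncomm_ring
    have hsal : s*al = al*s := by
      rw [hal_def]
      calc s*(1-a*c) = s - s*(a*c) := by noncomm_ring
      _ = s - (a*c)*s := by rw [hsP]
      _ = (1-a*c)*s := by noncomm_ring
    have hsx : x*s = s*x := hx2 s hsal
    set v : A := b*(x*d) with hv_def
    set Dl : A := t*v - v*t with hD_def
    have hdD : d*Dl = 0 := by
      rw [hD_def, hv_def]
      have hA : d*(t*(b*(x*d))) = (x*s)*d := by
        calc d*(t*(b*(x*d))) = (d*(t*b))*(x*d) := by noncomm_ring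
        _ = s*(x*d) := by rw [← hs_def]
        _ = (s*x)*d := by noncomm_ring
        _ = (x*s)*d := by rw [← hsx]
      have hB : d*((b*(x*d))*t) = (x*s)*d := by
        calc d*((b*(x*d))*t) = (((d*b)*x)*d)*t := by noncomm_ring
        _ = ((x*(d*b))*d)*t := by rw [← hRx]
        _ = (x*(d*b*d))*t := by noncomm_ring
        _ = (x*(a*c*d))*t := by rw [← h1]
        _ = x*((a*c*d)*t) := by noncomm_ring
        _ = x*((d*b*d)*t) := by rw [h1]
        _ = x*(d*((b*d)*t)) := by noncomm_ring
        _ = x*(d*(t*(b*d))) := by rw [← htQ]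
        _ = x*((d*(t*b))*d) := by noncomm_ring
        _ = x*(s*d) := by rw [← hs_def]
        _ = (x*s)*d := by noncomm_ring
      calc d*(t*(b*(x*d)) - (b*(x*d))*t) = d*(t*(b*(x*d))) - d*((b*(x*d))*t) := by noncomm_ring
      _ = (x*s)*d - (x*s)*d := by rw [hA, hB]
      _ = 0 := by abel
    have hbeD : be*Dl = Dl := by
      rw [hbe_def]
      calc (1-b*d)*Dl = Dl - b*(d*Dl) := by noncomm_ring
      _ = Dl := by rw [hdD]; noncomm_ring
    have hbekD : ∀ k, be^k*Dl = Dl := by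
      intro k
      induction k with
      | zero => rw [pow_zero, one_mul]
      | succ m ih => rw [pow_succ', mul_assoc, ih, hbeD]
    have htbe : ∀ k, t*be^k = be^k*t := fun k => ((show Commute t be from ht).pow_right k).eq
    have hterm : ∀ k : ℕ,
        t*(be^k*(b*d) - be^(k+1)*v) - (be^k*(b*d) - be^(k+1)*v)*t = -Dl := by
      intro k
      have hA : t*(be^k*(b*d)) = (be^k*(b*d))*t := by
        calc t*(be^k*(b*d)) = (t*be^k)*(b*d) := by noncomm_ring
        _ = (be^k*t)*(b*d) := by rw [htbe k]
        _ = be^k*(t*(b*d)) := by noncomm_ring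
        _ = be^k*((b*d)*t) := by rw [htQ]
        _ = (be^k*(b*d))*t := by noncomm_ring
      have hB : t*(be^(k+1)*v) - (be^(k+1)*v)*t = Dl := by
        calc t*(be^(k+1)*v) - (be^(k+1)*v)*t
            = (t*be^(k+1))*v - be^(k+1)*(v*t) := by noncomm_ring
        _ = (be^(k+1)*t)*v - be^(k+1)*(v*t) := by rw [htbe (k+1)]
        _ = be^(k+1)*(t*v - v*t) := by noncomm_ring
        _ = Dl := by rw [← hD_def, hbekD]
      calc t*(be^k*(b*d) - be^(k+1)*v) - (be^k*(b*d) - be^(k+1)*v)*t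
          = (t*(be^k*(b*d)) - (be^k*(b*d))*t) - (t*(be^(k+1)*v) - (be^(k+1)*v)*t) := by
            noncomm_ring
      _ = -Dl := by rw [hA, hB]; abel
    have hbe_b : be*b = b*al := by
      rw [hbe_def, hal_def]
      calc (1-b*d)*b = b - b*(d*b) := by noncomm_ring
      _ = b - b*(a*c) := by rw [h2']
      _ = b*(1-a*c) := by noncomm_ring
    have hbek_b : ∀ k, be^k*b = b*al^k := by
      intro k
      induction k with
      | zero => rw [pow_zero, pow_zero, one_mul, mul_one]
      | succ m ih =>
        calc be^(m+1)*b = be^m*(be*b) := by rw [pow_succ, mul_assoc]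
        _ = be^m*(b*al) := by rw [hbe_b]
        _ = (be^m*b)*al := by noncomm_ring
        _ = (b*al^m)*al := by rw [ih]
        _ = b*al^(m+1) := by rw [pow_succ]; noncomm_ring
    have hterm_eq : ∀ k : ℕ, be^k*(b*d) - be^(k+1)*v = b*(al^k - al^(k+1)*x)*d := by
      intro k
      calc be^k*(b*d) - be^(k+1)*v = (be^k*b)*d - (be^(k+1)*b)*(x*d) := by
            rw [hv_def]; noncomm_ring
      _ = (b*al^k)*d - (b*al^(k+1))*(x*d) := by rw [hbek_b k, hbek_b (k+1)]
      _ = b*(al^k - al^(k+1)*x)*d := by noncomm_ring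
    set T : ℕ → A := fun N => ∑ k ∈ Finset.range N, (al^k - al^(k+1)*x) with hT_def
    have hsumT : ∀ N : ℕ, t*(b*(T N)*d) - (b*(T N)*d)*t = -(N • Dl) := by
      intro N
      have hbT : b*(T N)*d = ∑ k ∈ Finset.range N, (be^k*(b*d) - be^(k+1)*v) := by
        rw [hT_def]
        calc b*(∑ k ∈ Finset.range N, (al^k - al^(k+1)*x))*d
            = ∑ k ∈ Finset.range N, b*(al^k - al^(k+1)*x)*d := by
              rw [Finset.mul_sum, Finset.sum_mul]
        _ = ∑ k ∈ Finset.range N, (be^k*(b*d) - be^(k+1)*v) := by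
              refine Finset.sum_congr rfl fun k _ => (hterm_eq k).symm
      rw [hbT, Finset.mul_sum, Finset.sum_mul, ← Finset.sum_sub_distrib]
      calc ∑ k ∈ Finset.range N,
            (t*(be^k*(b*d) - be^(k+1)*v) - (be^k*(b*d) - be^(k+1)*v)*t)
          = ∑ _k ∈ Finset.range N, (-Dl) := Finset.sum_congr rfl fun k _ => hterm k
      _ = -(N • Dl) := by rw [Finset.sum_const, Finset.card_range, smul_neg]
    have htend0 : Tendsto (fun N : ℕ => abar^N) atTop (𝓝 0) := rz_tendsto_pow_zero abar rz_abar
    have hsum_ab : ∀ N : ℕ, (∑ k ∈ Finset.range N, abar^k) = g - abar^N*g := by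
      intro N
      have hh := geom_sum_mul abar N
      have hh2 : (∑ k ∈ Finset.range N, abar^k)*(1-abar) = 1 - abar^N := by
        calc (∑ k ∈ Finset.range N, abar^k)*(1-abar)
            = -((∑ k ∈ Finset.range N, abar^k)*(abar-1)) := by noncomm_ring
        _ = -(abar^N - 1) := by rw [hh]
        _ = 1 - abar^N := by abel
      calc (∑ k ∈ Finset.range N, abar^k)
          = (∑ k ∈ Finset.range N, abar^k)*((1-abar)*g) := by rw [hg2, mul_one]
      _ = ((∑ k ∈ Finset.range N, abar^k)*(1-abar))*g := by noncomm_ring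
      _ = (1 - abar^N)*g := by rw [hh2]
      _ = g - abar^N*g := by noncomm_ring
    have hTapp : ∀ N : ℕ, T N = ∑ k ∈ Finset.range N, (al^k - al^(k+1)*x) := by
      intro N
      simp only [hT_def]
    have hTN1 : ∀ N : ℕ, 1 ≤ N → (∑ k ∈ Finset.range N, abar^k) = e + T N := by
      intro N hN
      induction N with
      | zero => omega
      | succ m ih =>
        rcases Nat.eq_zero_or_pos m with hm0 | hmpos
        · subst hm0
          rw [hTapp]
          simp only [zero_add, Finset.range_one, Finset.sum_singleton, pow_zero, pow_one]
          rw [← he_def]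
          abel
        · rw [Finset.sum_range_succ, ih hmpos, habank m hmpos, hTapp m, hTapp (m+1),
            Finset.sum_range_succ]
          have hx5 : al^(m+1)*x = al^m*e := by
            rw [he_def, pow_succ]
            noncomm_ring
          rw [hx5]
          abel
    have hTeq : ∀ᶠ N : ℕ in atTop, T N = (g - e) - abar^N*g := by
      filter_upwards [eventually_ge_atTop 1] with N hN
      have h6 := hTN1 N hN
      rw [hsum_ab N] at h6
      have h7 : (g - abar^N*g) - e = T N := by rw [h6]; abel
      rw [← h7]
      abel
    have hTlim : Tendsto T atTop (𝓝 (g - e)) := by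
      have hrhs : Tendsto (fun N : ℕ => (g - e) - abar^N*g) atTop (𝓝 (g - e)) := by
        have h7 : Tendsto (fun N : ℕ => abar^N*g) atTop (𝓝 0) := by
          have := htend0.mul_const g
          rwa [zero_mul] at this
        have h8 := Filter.Tendsto.sub
          (tendsto_const_nhds : Tendsto (fun _ : ℕ => (g-e)) atTop (𝓝 (g-e))) h7
        rwa [sub_zero] at h8
      exact hrhs.congr' (Filter.EventuallyEq.symm hTeq)
    have hFlim : Tendsto (fun N : ℕ => t*(b*(T N)*d) - (b*(T N)*d)*t) atTop
        (𝓝 (t*(b*(g-e)*d) - (b*(g-e)*d)*t)) := by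
      have hbTd : Tendsto (fun N : ℕ => b*(T N)*d) atTop (𝓝 (b*(g-e)*d)) := by
        have := (hTlim.const_mul b).mul_const d
        exact this
      exact (hbTd.const_mul t).sub (hbTd.mul_const t)
    have hNd : Tendsto (fun N : ℕ => -((N : ℕ) • Dl)) atTop
        (𝓝 (t*(b*(g-e)*d) - (b*(g-e)*d)*t)) :=
      hFlim.congr hsumT
    have hDelta0 : Dl = 0 := by
      have hs1 : Tendsto (fun N : ℕ => -(((N+1) : ℕ) • Dl)) atTop
          (𝓝 (t*(b*(g-e)*d) - (b*(g-e)*d)*t)) := hNd.comp (tendsto_add_atTop_nat 1)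
      have hs2 := hs1.sub hNd
      rw [sub_self] at hs2
      have heq2 : ∀ N : ℕ, (-(((N+1):ℕ) • Dl)) - (-((N:ℕ) • Dl)) = -Dl := by
        intro N
        rw [succ_nsmul]
        abel
      have hs3 : Tendsto (fun _ : ℕ => -Dl) atTop (𝓝 (0:A)) := hs2.congr heq2
      have h9 := tendsto_nhds_unique hs3 tendsto_const_nhds
      exact neg_eq_zero.mp h9.symm
    have htv : t*v = v*t := sub_eq_zero.mp (hD_def.symm.trans hDelta0)
    have hZ0 : t*(b*(g-e)*d) = (b*(g-e)*d)*t := by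
      have hz : Tendsto (fun _ : ℕ => (0:A)) atTop
          (𝓝 (t*(b*(g-e)*d) - (b*(g-e)*d)*t)) := by
        refine hNd.congr fun N => ?_
        rw [hDelta0]
        simp
      have h10 := tendsto_nhds_unique hz tendsto_const_nhds
      exact sub_eq_zero.mp h10
    have hbwd : b*w*d = v - b*(g-e)*d := by
      rw [hv_def, hw_def]
      noncomm_ring
    calc y*t = (1 + (v - b*(g-e)*d))*t := by rw [hy_def, hbwd]
    _ = t + v*t - (b*(g-e)*d)*t := by noncomm_ring
    _ = t + t*v - t*(b*(g-e)*d) := by rw [← htv, ← hZ0]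
    _ = t*(1 + (v - b*(g-e)*d)) := by noncomm_ring
    _ = t*y := by rw [← hbwd, ← hy_def]
  exact ⟨y, goal1, goal2, goal3⟩
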